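/- There exist positive constants c₁, c₂ such that for every even integer n ≥ 4, c₁ · n / (log log(10 n))² ≤ M_R(n) ≤ c₂ · n · (log log(10 n))², where M_R(n) = π c₀ n ∏_{p ∣ n-1} (1 - χ(p)/p) ∏_{p ∣ n, p>2} (1 + (p+χ(p))/(p(p-2))) ∏_{p ∤ n(n-1)} (1 + 2χ(p)/(p(p-2))). -/

import Mathlib

noncomputable def chi (d : ℕ) : ℝ := if d % 4 = 1 then 1 else if d % 4 = 3 then -1 else 0

/-- The twin-prime-type constant `c₀ = 2 ∏_{p > 2} (1 - 1/(p-1)²)`. -/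
noncomputable def c₀ : ℝ :=
  2 * ∏' p : {p : Nat.Primes // 2 < (p : ℕ)}, (1 - 1 / (((p : ℕ) : ℝ) - 1) ^ 2)

/-- The expected main term `M_R(n)` in the binary Goldbach problem weighted by
`r(p₁ - 1)`. -/
noncomputable def MR (n : ℕ) : ℝ :=
  Real.pi * c₀ * n *
    (∏ p ∈ (n - 1).primeFactors, (1 - chi p / p)) *
    (∏ p ∈ n.primeFactors.filter (fun p => 2 < p),
      (1 + ((p : ℝ) + chi p) / (p * ((p : ℝ) - 2)))) *
    (∏' p : {p : Nat.Primes // ¬ (p : ℕ) ∣ n * (n - 1)},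
      (1 + 2 * chi (p : ℕ) / ((p : ℕ) * (((p : ℕ) : ℝ) - 2))))



open Finset

lemma sum_inv_sq_le (M : ℕ) : ∑ k ∈ Icc 1 M, (1 / (k:ℝ)^2) ≤ 2 := by
  have h : ∀ M : ℕ, 1 ≤ M → ∑ k ∈ Icc 1 M, (1 / (k:ℝ)^2) ≤ 2 - 1/(M:ℝ) := by
    intro M hM
    induction M with
    | zero => omega
    | succ m ih =>
      rcases Nat.eq_or_lt_of_le hM with h1 | h1
      · simp [← h1]; norm_num
      · have hm : 1 ≤ m := by omega
        rw [Finset.sum_Icc_succ_top (by omega)]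
        have hmR : (1:ℝ) ≤ m := by exact_mod_cast hm
        have key : (1:ℝ)/((m+1:ℕ):ℝ)^2 ≤ 1/(m:ℝ) - 1/((m:ℝ)+1) := by
          push_cast
          rw [div_sub_div _ _ (by linarith) (by linarith)]
          rw [div_le_div_iff₀ (by positivity) (by positivity)]
          nlinarith
        have := ih hm
        push_cast at *
        linarith
  rcases Nat.eq_zero_or_pos M with h0 | h0
  · simp [h0]
  · have hh := h M h0
    have hM : (0:ℝ) < M := by exact_mod_cast h0
    have : (0:ℝ) ≤ 1/(M:ℝ) := by positivity
    linarith

lemma abs_log_one_add_le {x : ℝ} (hx : |x| ≤ 2/3) : |Real.log (1+x)| ≤ 3 * |x| := by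
  rcases abs_le.1 hx with ⟨h1, h2⟩
  have hpos : (0:ℝ) < 1 + x := by linarith
  rcases le_or_gt 0 x with h | h
  · have hl : Real.log (1+x) ≤ x := by
      have := Real.log_le_sub_one_of_pos hpos; linarith
    have hge : 0 ≤ Real.log (1+x) := Real.log_nonneg (by linarith)
    rw [abs_of_nonneg hge, abs_of_nonneg h]; linarith
  · have key : Real.exp (3*x) ≤ 1 + x := by
      have hb := Real.add_one_le_exp (-(3*x))
      have e1 : Real.exp (-(3*x)) * Real.exp (3*x) = 1 := by
        rw [← Real.exp_add]; norm_num
      nlinarith [Real.exp_pos (3*x), Real.exp_pos (-(3*x))]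
    have hle : Real.log (1+x) ≤ 0 := Real.log_nonpos (by linarith) (by linarith)
    have : 3*x ≤ Real.log (1+x) := by
      calc 3*x = Real.log (Real.exp (3*x)) := (Real.log_exp _).symm
        _ ≤ Real.log (1+x) := Real.log_le_log (Real.exp_pos _) key
    rw [abs_of_nonpos hle, abs_of_neg h]; linarith

-- exp(-2x) ≤ 1-x for 0 ≤ x ≤ 1/2
lemma exp_neg_two_le {x : ℝ} (h0 : 0 ≤ x) (h1 : x ≤ 1/2) : Real.exp (-(2*x)) ≤ 1 - x := by
  have hb := Real.add_one_le_exp (2*x)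
  have e1 : Real.exp (-(2*x)) * Real.exp (2*x) = 1 := by rw [← Real.exp_add]; norm_num
  nlinarith [Real.exp_pos (2*x), Real.exp_pos (-(2*x))]

-- θ(N) ≤ N log 4
lemma theta_le (N : ℕ) : ∑ p ∈ N.succ.primesBelow, Real.log p ≤ N * Real.log 4 := by
  have h1 : ∑ p ∈ N.succ.primesBelow, Real.log p = Real.log (primorial N) := by
    rw [primorial, Nat.primesBelow]
    rw [Nat.cast_prod, Real.log_prod]
    intro p hp
    simp only [mem_filter, mem_range] at hp
    exact_mod_cast hp.2.pos.ne'
  rw [h1]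
  calc Real.log (primorial N) ≤ Real.log ((4:ℕ)^N) := by
        apply Real.log_le_log (by exact_mod_cast primorial_pos N)
        exact_mod_cast primorial_le_4_pow N
    _ = N * Real.log 4 := by push_cast [Real.log_pow]; norm_num

-- ∑_{p ≤ N} log p / p ≤ log N + log 4
lemma mertens1 (N : ℕ) (hN : 1 ≤ N) :
    ∑ p ∈ N.succ.primesBelow, Real.log p / p ≤ Real.log N + Real.log 4 := by
  have key : ∑ p ∈ N.succ.primesBelow, ((N / p : ℕ) : ℝ) * Real.log p
      = ∑ k ∈ Ioc 0 N, ∑ p ∈ k.primeFactors, Real.log p := by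
    have h1 : ∀ p ∈ N.succ.primesBelow, ((N / p : ℕ) : ℝ) * Real.log p
        = ∑ k ∈ (Ioc 0 N).filter (p ∣ ·), Real.log p := by
      intro p hp
      rw [Finset.sum_const, ← Nat.Ioc_filter_dvd_card_eq_div, nsmul_eq_mul]
    rw [Finset.sum_congr rfl h1]
    simp_rw [Finset.sum_filter]
    rw [Finset.sum_comm]
    apply Finset.sum_congr rfl
    intro k hk
    simp only [mem_Ioc] at hk
    rw [← Finset.sum_filter]
    congr 1
    ext p
    simp only [mem_filter, Nat.mem_primesBelow, Nat.mem_primeFactors]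
    constructor
    · rintro ⟨⟨hlt, hp⟩, hdvd⟩; exact ⟨hp, hdvd, by omega⟩
    · rintro ⟨hp, hdvd, -⟩
      have := Nat.le_of_dvd hk.1 hdvd
      exact ⟨⟨by omega, hp⟩, hdvd⟩
  have step2 : ∀ k ∈ Ioc 0 N, ∑ p ∈ k.primeFactors, Real.log p ≤ Real.log N := by
    intro k hk
    simp only [mem_Ioc] at hk
    have h1 : ∑ p ∈ k.primeFactors, Real.log p = Real.log (∏ p ∈ k.primeFactors, (p:ℝ)) := by
      rw [Real.log_prod]
      intro p hp
      exact_mod_cast (Nat.prime_of_mem_primeFactors hp).pos.ne'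
    rw [h1]
    apply Real.log_le_log
    · rw [← Nat.cast_prod]
      exact_mod_cast Finset.prod_pos fun p hp => (Nat.prime_of_mem_primeFactors hp).pos
    · have hd : ∏ p ∈ k.primeFactors, p ∣ k := Nat.prod_primeFactors_dvd k
      have h2 := Nat.le_of_dvd hk.1 hd
      rw [← Nat.cast_prod]
      exact_mod_cast le_trans h2 hk.2
  have hNR : (0:ℝ) < N := by exact_mod_cast hN
  have main : ∑ p ∈ N.succ.primesBelow, ((N / p : ℕ) : ℝ) * Real.log p ≤ N * Real.log N := by
    rw [key]
    calc ∑ k ∈ Ioc 0 N, ∑ p ∈ k.primeFactors, Real.log p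
        ≤ ∑ k ∈ Ioc 0 N, Real.log N := Finset.sum_le_sum step2
      _ = N * Real.log N := by rw [Finset.sum_const, Nat.card_Ioc]; simp
  -- (N:ℝ)/p ≤ (N/p : ℕ) + 1
  have floor : ∀ p ∈ N.succ.primesBelow, (N:ℝ)/p * Real.log p ≤ (((N / p : ℕ):ℝ) + 1) * Real.log p := by
    intro p hp
    have hp2 := (Nat.mem_primesBelow.1 hp).2.two_le
    have hpR : (0:ℝ) < p := by exact_mod_cast (by omega : 0 < p)
    have hlog : 0 ≤ Real.log p := Real.log_nonneg (by exact_mod_cast (by omega : 1 ≤ p))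
    apply mul_le_mul_of_nonneg_right _ hlog
    rw [div_le_iff₀ hpR]
    have h1 := Nat.div_add_mod N p
    have h2 : N % p < p := Nat.mod_lt N (by omega)
    have h1R : ((p * (N/p) + N % p : ℕ) : ℝ) = N := by rw [h1]
    push_cast at h1R
    have h2R : ((N % p : ℕ) : ℝ) < p := by exact_mod_cast h2
    nlinarith
  have total : N * ∑ p ∈ N.succ.primesBelow, Real.log p / p ≤ N * Real.log N + N * Real.log 4 := by
    rw [Finset.mul_sum]
    calc ∑ p ∈ N.succ.primesBelow, (N:ℝ) * (Real.log p / p)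
        = ∑ p ∈ N.succ.primesBelow, (N:ℝ)/p * Real.log p := by
          apply Finset.sum_congr rfl; intro p hp; ring
      _ ≤ ∑ p ∈ N.succ.primesBelow, (((N / p : ℕ):ℝ) + 1) * Real.log p :=
          Finset.sum_le_sum floor
      _ = ∑ p ∈ N.succ.primesBelow, ((N / p : ℕ):ℝ) * Real.log p
          + ∑ p ∈ N.succ.primesBelow, Real.log p := by
          rw [← Finset.sum_add_distrib]; apply Finset.sum_congr rfl; intro p hp; ring
      _ ≤ N * Real.log N + N * Real.log 4 := add_le_add main (theta_le N)
  have := (mul_le_mul_iff_right₀ hNR).1 (by linarith [total] : (N:ℝ) * ∑ p ∈ N.succ.primesBelow, Real.log p / p ≤ N * (Real.log N + Real.log 4))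
  linarith

lemma tele (g : ℕ → ℝ) {m n : ℕ} (h : m ≤ n) :
    ∑ k ∈ Ico m n, (g (k+1) - g k) = g n - g m := by
  rw [Finset.sum_Ico_eq_sub _ h, Finset.sum_range_sub, Finset.sum_range_sub]; ring

lemma log3_gt_one : (1:ℝ) < Real.log 3 := by
  rw [Real.lt_log_iff_exp_lt (by norm_num)]
  calc Real.exp 1 < 2.7182818286 := Real.exp_one_lt_d9
    _ < 3 := by norm_num

-- Abel summation identity
lemma abel_identity (N : ℕ) (hN : 3 ≤ N) :
    ∑ p ∈ N.succ.primesBelow.filter (fun p => 3 ≤ p), (1:ℝ)/p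
      = (∑ p ∈ N.succ.primesBelow.filter (fun p => 3 ≤ p), Real.log p / p) / Real.log N
        + ∑ k ∈ Ico 3 N, (1/Real.log k - 1/Real.log (k+1))
            * (∑ p ∈ k.succ.primesBelow.filter (fun p => 3 ≤ p), Real.log p / p) := by
  induction N, hN using Nat.le_induction with
  | base =>
    have h4 : (Nat.primesBelow 4).filter (fun p => 3 ≤ p) = {3} := by decide
    simp only [Nat.succ_eq_add_one] at *
    rw [show (3+1 : ℕ) = 4 from rfl, h4]
    simp [Real.log_ne_zero_of_pos_of_ne_one]
    rw [div_div, mul_comm, ← div_div]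
    rw [div_self (ne_of_gt (by linarith [log3_gt_one]))]
    norm_num
  | succ N hN ih =>
    have hlogN : (0:ℝ) < Real.log N := by
      have : (3:ℝ) ≤ N := by exact_mod_cast hN
      calc (0:ℝ) < 1 := one_pos
        _ < Real.log 3 := log3_gt_one
        _ ≤ Real.log N := Real.log_le_log (by norm_num) this
    have hlogN1 : (0:ℝ) < Real.log (N+1) := by
      have : (3:ℝ) ≤ (N:ℝ)+1 := by push_cast [Nat.cast_le.2 hN]; linarith [show (3:ℝ) ≤ (N:ℝ) by exact_mod_cast hN]
      calc (0:ℝ) < 1 := one_pos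
        _ < Real.log 3 := log3_gt_one
        _ ≤ Real.log ((N:ℝ)+1) := Real.log_le_log (by norm_num) this
    set b : ℕ → ℝ := fun k => ∑ p ∈ k.succ.primesBelow.filter (fun p => 3 ≤ p), Real.log p / p with hb
    set s : ℕ → ℝ := fun k => ∑ p ∈ k.succ.primesBelow.filter (fun p => 3 ≤ p), (1:ℝ)/p with hs
    have hstep : ∀ (f : ℕ → ℝ), (∑ p ∈ (N+1).succ.primesBelow.filter (fun p => 3 ≤ p), f p)
        = (∑ p ∈ N.succ.primesBelow.filter (fun p => 3 ≤ p), f p)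
          + (if (N+1).Prime then f (N+1) else 0) := by
      intro f
      rw [Nat.succ_eq_add_one, Nat.primesBelow_succ]
      split_ifs with hp
      · rw [Finset.filter_insert, if_pos (by omega)]
        rw [Finset.sum_insert (by
          intro hmem
          exact (Nat.notMem_primesBelow (N+1)) (Finset.mem_of_mem_filter _ hmem))]
        ring
      · ring
    have hsum_step : ∑ k ∈ Ico 3 (N+1), (1/Real.log k - 1/Real.log ((k:ℝ)+1)) * b k
        = ∑ k ∈ Ico 3 N, (1/Real.log k - 1/Real.log ((k:ℝ)+1)) * b k
          + (1/Real.log (N:ℝ) - 1/Real.log ((N:ℝ)+1)) * b N := by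
      rw [Finset.sum_Ico_succ_top hN]
    have hbN1 : b (N+1) = b N + (if (N+1).Prime then Real.log (N+1) / (N+1) else 0) := by
      have := hstep (fun p => Real.log p / p); simpa [hb] using this
    have hsN1 : s (N+1) = s N + (if (N+1).Prime then 1 / ((N:ℝ)+1) else 0) := by
      have := hstep (fun p => (1:ℝ)/p); simpa [hs] using this
    show s (N+1) = b (N+1) / Real.log (((N+1:ℕ):ℝ)) + ∑ k ∈ Ico 3 (N+1), (1/Real.log k - 1/Real.log ((k:ℝ)+1)) * b k
    rw [hsN1, hsum_step, hbN1]
    have ihs : s N = b N / Real.log N + ∑ k ∈ Ico 3 N, (1/Real.log k - 1/Real.log (k+1)) * b k := ih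
    rw [ihs]
    push_cast
    split_ifs with hp
    · field_simp
      ring
    · field_simp
      ring

lemma log_le_log_nat {a b : ℕ} (h1 : 0 < a) (h : a ≤ b) : Real.log a ≤ Real.log b :=
  Real.log_le_log (by exact_mod_cast h1) (by exact_mod_cast h)

lemma log4_lt : Real.log 4 < 1.4 := by
  have h2 : Real.log 2 < 0.6931471808 := Real.log_two_lt_d9
  have : (4:ℝ) = 2^2 := by norm_num
  rw [this, Real.log_pow]
  push_cast; linarith

lemma mertens2 (N : ℕ) (hN : 3 ≤ N) :
    ∑ p ∈ N.succ.primesBelow, (1:ℝ)/p ≤ Real.log (Real.log N) + 5 := by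
  have hNR : (3:ℝ) ≤ N := by exact_mod_cast hN
  have hlogN : (1:ℝ) < Real.log N :=
    lt_of_lt_of_le log3_gt_one (Real.log_le_log (by norm_num) hNR)
  -- b_k bounds
  have hb_nonneg : ∀ k : ℕ, 0 ≤ ∑ p ∈ k.succ.primesBelow.filter (fun p => 3 ≤ p), Real.log p / p := by
    intro k
    apply Finset.sum_nonneg
    intro p hp
    have := Nat.prime_of_mem_primesBelow (Finset.mem_of_mem_filter _ hp)
    have h1 : (1:ℝ) ≤ p := by exact_mod_cast this.one_lt.le
    exact div_nonneg (Real.log_nonneg h1) (by linarith)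
  have hb_le : ∀ k : ℕ, 1 ≤ k → ∑ p ∈ k.succ.primesBelow.filter (fun p => 3 ≤ p), Real.log p / p
      ≤ Real.log k + Real.log 4 := by
    intro k hk
    refine le_trans ?_ (mertens1 k hk)
    apply Finset.sum_le_sum_of_subset_of_nonneg (Finset.filter_subset _ _)
    intro p hp _
    have := Nat.prime_of_mem_primesBelow hp
    have h1 : (1:ℝ) ≤ p := by exact_mod_cast this.one_lt.le
    exact div_nonneg (Real.log_nonneg h1) (by linarith)
  -- logs of k for k in Ico 3 N
  have hlogk : ∀ k : ℕ, 3 ≤ k → (1:ℝ) < Real.log k := fun k hk =>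
    lt_of_lt_of_le log3_gt_one (log_le_log_nat (by norm_num) hk)
  -- Δ_k ≥ 0
  have hdelta_nonneg : ∀ k ∈ Ico 3 N, (0:ℝ) ≤ 1/Real.log k - 1/Real.log ((k:ℝ)+1) := by
    intro k hk
    simp only [mem_Ico] at hk
    have h1 := hlogk k hk.1
    have hk3 : (3:ℝ) ≤ (k:ℝ) := by exact_mod_cast hk.1
    have h2 : Real.log (k:ℝ) ≤ Real.log ((k:ℝ)+1) := by
      apply Real.log_le_log (by linarith) (by linarith)
    have h3 : (0:ℝ) < Real.log k := by linarith
    have h4 : (0:ℝ) < Real.log ((k:ℝ)+1) := by linarith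
    have := one_div_le_one_div_of_le h3 h2
    linarith
  -- pointwise: Δ_k · log k ≤ loglog(k+1) - loglog k
  have hpointwise : ∀ k ∈ Ico 3 N, (1/Real.log k - 1/Real.log ((k:ℝ)+1)) * Real.log k
      ≤ Real.log (Real.log ((k:ℝ)+1)) - Real.log (Real.log k) := by
    intro k hk
    simp only [mem_Ico] at hk
    have hk3 : (3:ℝ) ≤ (k:ℝ) := by exact_mod_cast hk.1
    have hx : (1:ℝ) < Real.log k := hlogk k hk.1
    have h2 : Real.log (k:ℝ) ≤ Real.log ((k:ℝ)+1) :=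
      Real.log_le_log (by linarith) (by linarith)
    set x := Real.log (k:ℝ)
    set y := Real.log ((k:ℝ)+1)
    have hy : (0:ℝ) < y := by linarith
    have hlhs : (1/x - 1/y) * x = 1 - x/y := by field_simp
    rw [hlhs]
    have hlog : Real.log (x/y) ≤ x/y - 1 := Real.log_le_sub_one_of_pos (by positivity)
    rw [Real.log_div (by linarith) (by linarith)] at hlog
    linarith
  -- telescoping sums
  have htel1 : ∑ k ∈ Ico 3 N, (1/Real.log k - 1/Real.log ((k:ℝ)+1)) ≤ 1 := by
    have t := tele (fun j : ℕ => -(1/Real.log j)) (show (3:ℕ) ≤ N by omega)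
    have teq : ∑ k ∈ Ico 3 N, (1/Real.log k - 1/Real.log ((k:ℝ)+1))
        = -(1 / Real.log ↑N) - -(1 / Real.log ((3:ℕ):ℝ)) := by
      rw [← t]
      apply Finset.sum_congr rfl
      intro k _
      push_cast
      ring
    rw [teq]
    have h1 : (0:ℝ) < Real.log 3 := by linarith [log3_gt_one]
    have h2 : (0:ℝ) ≤ 1/Real.log N := by positivity
    have h3 : 1/Real.log (3:ℕ) ≤ 1 := by
      rw [show ((3:ℕ):ℝ) = 3 by norm_num]
      rw [div_le_one h1]; linarith [log3_gt_one]
    linarith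
  have htel2 : ∑ k ∈ Ico 3 N, (Real.log (Real.log ((k:ℝ)+1)) - Real.log (Real.log k))
      ≤ Real.log (Real.log N) := by
    have t := tele (fun j : ℕ => Real.log (Real.log j)) (show (3:ℕ) ≤ N by omega)
    have teq : ∑ k ∈ Ico 3 N, (Real.log (Real.log ((k:ℝ)+1)) - Real.log (Real.log k))
        = Real.log (Real.log ↑N) - Real.log (Real.log ((3:ℕ):ℝ)) := by
      rw [← t]
      apply Finset.sum_congr rfl
      intro k _
      push_cast
      ring
    rw [teq]
    have h1 : (0:ℝ) ≤ Real.log (Real.log (3:ℕ)) := by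
      rw [show ((3:ℕ):ℝ) = 3 by norm_num]
      exact Real.log_nonneg (by linarith [log3_gt_one])
    linarith
  -- combine via abel identity
  have habel := abel_identity N hN
  have hmain : ∑ p ∈ N.succ.primesBelow.filter (fun p => 3 ≤ p), (1:ℝ)/p
      ≤ Real.log (Real.log N) + 4.5 := by
    rw [habel]
    have hlogNpos : (0:ℝ) < Real.log N := by linarith
    have h1 : (∑ p ∈ N.succ.primesBelow.filter (fun p => 3 ≤ p), Real.log p / p) / Real.log N
        ≤ 2.4 := by
      rw [div_le_iff₀ hlogNpos]
      calc ∑ p ∈ N.succ.primesBelow.filter (fun p => 3 ≤ p), Real.log p / p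
          ≤ Real.log N + Real.log 4 := hb_le N (by omega)
        _ ≤ Real.log N + 1.4 * 1 := by linarith [log4_lt]
        _ ≤ Real.log N + 1.4 * Real.log N := by nlinarith
        _ = 2.4 * Real.log N := by ring
    have h2 : ∑ k ∈ Ico 3 N, (1/Real.log k - 1/Real.log ((k:ℝ)+1))
          * (∑ p ∈ k.succ.primesBelow.filter (fun p => 3 ≤ p), Real.log p / p)
        ≤ Real.log (Real.log N) + 1.4 := by
      calc ∑ k ∈ Ico 3 N, (1/Real.log k - 1/Real.log ((k:ℝ)+1))
            * (∑ p ∈ k.succ.primesBelow.filter (fun p => 3 ≤ p), Real.log p / p)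
          ≤ ∑ k ∈ Ico 3 N, (1/Real.log k - 1/Real.log ((k:ℝ)+1)) * (Real.log k + Real.log 4) := by
            apply Finset.sum_le_sum
            intro k hk
            exact mul_le_mul_of_nonneg_left (hb_le k (by simp only [mem_Ico] at hk; omega))
              (hdelta_nonneg k hk)
        _ = ∑ k ∈ Ico 3 N, (1/Real.log k - 1/Real.log ((k:ℝ)+1)) * Real.log k
            + Real.log 4 * ∑ k ∈ Ico 3 N, (1/Real.log k - 1/Real.log ((k:ℝ)+1)) := by
            rw [Finset.mul_sum, ← Finset.sum_add_distrib]
            apply Finset.sum_congr rfl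
            intro k _
            ring
        _ ≤ Real.log (Real.log N) + 1.4 := by
            have ha := le_trans (Finset.sum_le_sum hpointwise) htel2
            have hd : ∑ k ∈ Ico 3 N, (1/Real.log k - 1/Real.log ((k:ℝ)+1)) ≥ 0 :=
              Finset.sum_nonneg hdelta_nonneg
            nlinarith [log4_lt, htel1, Real.log_nonneg (show (1:ℝ) ≤ 4 by norm_num)]
    linarith
  -- add back p = 2
  have hsplit := Finset.sum_filter_add_sum_filter_not N.succ.primesBelow (fun p => 3 ≤ p)
    (fun p => (1:ℝ)/p)
  have h2part : ∑ p ∈ N.succ.primesBelow.filter (fun p => ¬ 3 ≤ p), (1:ℝ)/p ≤ 1/2 := by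
    have hsub : N.succ.primesBelow.filter (fun p => ¬ 3 ≤ p) ⊆ {2} := by
      intro p hp
      simp only [Finset.mem_filter] at hp
      have := (Nat.prime_of_mem_primesBelow hp.1).two_le
      simp only [Finset.mem_singleton]
      omega
    calc ∑ p ∈ N.succ.primesBelow.filter (fun p => ¬ 3 ≤ p), (1:ℝ)/p
        ≤ ∑ p ∈ ({2} : Finset ℕ), (1:ℝ)/p := by
          apply Finset.sum_le_sum_of_subset_of_nonneg hsub
          intro p hp _
          positivity
      _ = 1/2 := by norm_num
  linarith

lemma exp3_lt_30 : (3:ℝ) < Real.log 30 := by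
  rw [Real.lt_log_iff_exp_lt (by norm_num)]
  have h := Real.exp_one_lt_d9
  calc Real.exp 3 = (Real.exp 1)^3 := by rw [← Real.exp_nat_mul]; norm_num
    _ < 2.7182818286^3 := by
        apply pow_lt_pow_left₀ h (le_of_lt (Real.exp_pos 1))
        norm_num
    _ < 30 := by norm_num

lemma sum_log_primeFactors_le (m : ℕ) (hm : 1 ≤ m) :
    ∑ p ∈ m.primeFactors, Real.log p ≤ Real.log m := by
  have h1 : ∑ p ∈ m.primeFactors, Real.log p = Real.log (∏ p ∈ m.primeFactors, (p:ℝ)) := by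
    rw [Real.log_prod]
    intro p hp
    exact_mod_cast (Nat.prime_of_mem_primeFactors hp).pos.ne'
  rw [h1]
  apply Real.log_le_log
  · rw [← Nat.cast_prod]
    exact_mod_cast Finset.prod_pos fun p hp => (Nat.prime_of_mem_primeFactors hp).pos
  · have hd : ∏ p ∈ m.primeFactors, p ∣ m := Nat.prod_primeFactors_dvd m
    have h2 := Nat.le_of_dvd hm hd
    rw [← Nat.cast_prod]
    exact_mod_cast h2

lemma key_lemma (m : ℕ) (hm : 3 ≤ m) :
    ∑ p ∈ m.primeFactors, (1:ℝ)/p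
      ≤ Real.log (Real.log (Real.log (10 * (m:ℝ)))) + 6 := by
  have hmR : (3:ℝ) ≤ m := by exact_mod_cast hm
  set Y : ℝ := Real.log (10 * (m:ℝ)) with hY
  have hY3 : 3 < Y := by
    calc (3:ℝ) < Real.log 30 := exp3_lt_30
      _ ≤ Y := Real.log_le_log (by norm_num) (by linarith)
  have hlogY : 1 < Real.log Y := by
    calc (1:ℝ) < Real.log 3 := log3_gt_one
      _ ≤ Real.log Y := Real.log_le_log (by norm_num) (by linarith)
  set y : ℕ := ⌊Y⌋₊ with hy
  have hy3 : 3 ≤ y := Nat.le_floor (by exact_mod_cast le_of_lt hY3)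
  have hyY : (y:ℝ) ≤ Y := Nat.floor_le (by linarith)
  have hYy1 : Y < (y:ℝ) + 1 := Nat.lt_floor_add_one Y
  -- split
  have hsplit := Finset.sum_filter_add_sum_filter_not m.primeFactors (fun p => p ≤ y)
    (fun p => (1:ℝ)/p)
  -- small primes
  have hsmall : ∑ p ∈ m.primeFactors.filter (fun p => p ≤ y), (1:ℝ)/p
      ≤ Real.log (Real.log (Real.log (10 * (m:ℝ)))) + 5 := by
    have hsub : m.primeFactors.filter (fun p => p ≤ y) ⊆ y.succ.primesBelow := by
      intro p hp
      simp only [Finset.mem_filter] at hp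
      exact Nat.mem_primesBelow.2 ⟨by omega, Nat.prime_of_mem_primeFactors hp.1⟩
    calc ∑ p ∈ m.primeFactors.filter (fun p => p ≤ y), (1:ℝ)/p
        ≤ ∑ p ∈ y.succ.primesBelow, (1:ℝ)/p := by
          apply Finset.sum_le_sum_of_subset_of_nonneg hsub
          intro p hp _
          positivity
      _ ≤ Real.log (Real.log y) + 5 := mertens2 y hy3
      _ ≤ Real.log (Real.log (Real.log (10 * (m:ℝ)))) + 5 := by
          have hy3R : (3:ℝ) ≤ (y:ℝ) := by exact_mod_cast hy3
          have h1 : Real.log (y:ℝ) ≤ Real.log Y := Real.log_le_log (by linarith) hyY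
          have h2 : 1 < Real.log (y:ℝ) := by
            calc (1:ℝ) < Real.log 3 := log3_gt_one
              _ ≤ Real.log (y:ℝ) := Real.log_le_log (by norm_num) hy3R
          have := Real.log_le_log (by linarith) h1
          linarith
  -- large primes
  have hlarge : ∑ p ∈ m.primeFactors.filter (fun p => ¬ p ≤ y), (1:ℝ)/p ≤ 1 := by
    have hpt : ∀ p ∈ m.primeFactors.filter (fun p => ¬ p ≤ y),
        (1:ℝ)/p ≤ Real.log p / (Y * Real.log Y) := by
      intro p hp
      simp only [Finset.mem_filter, not_le] at hp
      have hpY : Y < (p:ℝ) := by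
        have : (y:ℝ) + 1 ≤ p := by exact_mod_cast hp.2
        linarith
      have hpR : (0:ℝ) < p := by linarith
      have hlogp : Real.log Y ≤ Real.log p := Real.log_le_log (by linarith) (le_of_lt hpY)
      rw [div_le_div_iff₀ hpR (by positivity)]
      calc 1 * (Y * Real.log Y) = Y * Real.log Y := by ring
        _ ≤ p * Real.log p := by
            apply mul_le_mul (le_of_lt hpY) hlogp (by linarith) (by linarith)
        _ = Real.log p * p := by ring
    calc ∑ p ∈ m.primeFactors.filter (fun p => ¬ p ≤ y), (1:ℝ)/p
        ≤ ∑ p ∈ m.primeFactors.filter (fun p => ¬ p ≤ y), Real.log p / (Y * Real.log Y) :=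
          Finset.sum_le_sum hpt
      _ = (∑ p ∈ m.primeFactors.filter (fun p => ¬ p ≤ y), Real.log p) / (Y * Real.log Y) := by
          rw [Finset.sum_div]
      _ ≤ Y / (Y * Real.log Y) := by
          apply div_le_div_of_nonneg_right ?_ (by positivity)
          · calc ∑ p ∈ m.primeFactors.filter (fun p => ¬ p ≤ y), Real.log p
                ≤ ∑ p ∈ m.primeFactors, Real.log p := by
                  apply Finset.sum_le_sum_of_subset_of_nonneg (Finset.filter_subset _ _)
                  intro p hp _
                  have := (Nat.prime_of_mem_primeFactors hp).one_lt.le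
                  exact Real.log_nonneg (by exact_mod_cast this)
              _ ≤ Real.log m := sum_log_primeFactors_le m (by omega)
              _ ≤ Y := Real.log_le_log (by linarith) (by linarith)
      _ = 1 / Real.log Y := by
          have h1 : Y ≠ 0 := ne_of_gt (by linarith)
          have h2 : Real.log Y ≠ 0 := ne_of_gt (by linarith)
          field_simp
      _ ≤ 1 := by
          rw [div_le_one (by linarith)]
          linarith
  linarith

lemma tprod_bounds {ι : Type*} (f g : ι → ℝ) (hg : Summable g)
    (hfpos : ∀ i, 0 < f i) (hb : ∀ i, |Real.log (f i)| ≤ g i) :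
    Multipliable f ∧
      Real.exp (-(∑' i, g i)) ≤ ∏' i, f i ∧ (∏' i, f i) ≤ Real.exp (∑' i, g i) := by
  have habs : Summable fun i => |Real.log (f i)| :=
    Summable.of_nonneg_of_le (fun i => abs_nonneg _) hb hg
  have hsum : Summable fun i => Real.log (f i) := habs.of_abs
  have heq : Real.exp (∑' i, Real.log (f i)) = ∏' i, f i := by
    have h := Real.rexp_tsum_eq_tprod (f := f) hfpos hsum
    exact h
  have hmul : Multipliable f :=
    Real.multipliable_of_summable_log hfpos hsum
  have habs' : Summable fun i => ‖Real.log (f i)‖ := by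
    simp_rw [Real.norm_eq_abs]; exact habs
  have hn := norm_tsum_le_tsum_norm habs'
  rw [Real.norm_eq_abs] at hn
  simp_rw [Real.norm_eq_abs] at hn
  have htsum : |∑' i, Real.log (f i)| ≤ ∑' i, g i :=
    le_trans hn (Summable.tsum_le_tsum hb habs hg)
  rcases abs_le.1 htsum with ⟨h1, h2⟩
  exact ⟨hmul, by rw [← heq]; exact Real.exp_le_exp.2 h1,
    by rw [← heq]; exact Real.exp_le_exp.2 h2⟩

lemma abs_chi_le (d : ℕ) : |chi d| ≤ 1 := by
  unfold chi; split_ifs <;> norm_num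

-- summability of c/q² over any injection into ℕ
lemma summable_inj {S : Type*} (c : ℝ) (e : S → ℕ) (he : Function.Injective e) :
    Summable (fun s => c / (e s : ℝ)^2) := by
  have h1 : Summable (fun n : ℕ => c / (n:ℝ)^2) := by
    have h2 : Summable (fun n : ℕ => 1 / (n:ℝ)^2) :=
      Real.summable_one_div_nat_pow.2 one_lt_two
    have := h2.mul_left c
    simpa [div_eq_mul_inv] using this
  exact h1.comp_injective he


lemma c0_pos : 0 < c₀ := by
  unfold c₀
  have he : Function.Injective
      (fun p : {p : Nat.Primes // 2 < (p : ℕ)} => ((p : Nat.Primes) : ℕ)) :=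
    Nat.Primes.coe_nat_injective.comp Subtype.coe_injective
  have hq3 : ∀ p : {p : Nat.Primes // 2 < (p : ℕ)}, (3:ℝ) ≤ (((p : Nat.Primes) : ℕ) : ℝ) := by
    intro p
    exact_mod_cast p.2
  have hfpos : ∀ p : {p : Nat.Primes // 2 < (p : ℕ)},
      0 < 1 - 1 / (((p : ℕ) : ℝ) - 1) ^ 2 := by
    intro p
    have h3 := hq3 p
    have h1 : (2:ℝ) ≤ ((p:ℕ):ℝ) - 1 := by linarith
    have h2 : (4:ℝ) ≤ (((p:ℕ):ℝ) - 1)^2 := by nlinarith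
    have : 1 / (((p : ℕ) : ℝ) - 1) ^ 2 ≤ 1/4 := by
      apply div_le_div_of_nonneg_left (by norm_num) (by norm_num) h2
    linarith
  have hb : ∀ p : {p : Nat.Primes // 2 < (p : ℕ)},
      |Real.log (1 - 1 / (((p : ℕ) : ℝ) - 1) ^ 2)| ≤ 12 / (((p:ℕ):ℝ))^2 := by
    intro p
    have h3 := hq3 p
    have h1 : (2:ℝ) ≤ ((p:ℕ):ℝ) - 1 := by linarith
    have h2 : (4:ℝ) ≤ (((p:ℕ):ℝ) - 1)^2 := by nlinarith
    have hxle : 1 / (((p : ℕ) : ℝ) - 1) ^ 2 ≤ 1/4 :=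
      div_le_div_of_nonneg_left (by norm_num) (by norm_num) h2
    have hxpos : 0 < 1 / (((p : ℕ) : ℝ) - 1) ^ 2 := by positivity
    have habs : |(-(1 / (((p : ℕ) : ℝ) - 1) ^ 2))| ≤ 2/3 := by
      rw [abs_neg, abs_of_pos hxpos]; linarith
    have := abs_log_one_add_le habs
    rw [show (1:ℝ) + -(1 / (((p : ℕ) : ℝ) - 1) ^ 2) = 1 - 1 / (((p : ℕ) : ℝ) - 1) ^ 2 by ring]
      at this
    rw [abs_neg, abs_of_pos hxpos] at this
    refine le_trans this ?_
    rw [mul_one_div, div_le_div_iff₀ (by nlinarith) (by nlinarith)]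
    nlinarith
  obtain ⟨-, hlo, -⟩ := tprod_bounds
    (fun p : {p : Nat.Primes // 2 < (p : ℕ)} => 1 - 1 / (((p : ℕ) : ℝ) - 1) ^ 2)
    (fun p => 12 / (((p:ℕ):ℝ))^2)
    (summable_inj 12 _ he) hfpos hb
  have := lt_of_lt_of_le (Real.exp_pos _) hlo
  linarith

noncomputable def Kc : ℝ := ∑' p : Nat.Primes, (18:ℝ) / ((p:ℕ):ℝ)^2

set_option maxHeartbeats 1000000 in
lemma P3_bounds (n : ℕ) (h4 : 4 ≤ n) (h2 : 2 ∣ n) :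
    Real.exp (-Kc) ≤ (∏' p : {p : Nat.Primes // ¬ (p : ℕ) ∣ n * (n - 1)},
        (1 + 2 * chi (p : ℕ) / ((p : ℕ) * (((p : ℕ) : ℝ) - 2))))
      ∧ (∏' p : {p : Nat.Primes // ¬ (p : ℕ) ∣ n * (n - 1)},
        (1 + 2 * chi (p : ℕ) / ((p : ℕ) * (((p : ℕ) : ℝ) - 2)))) ≤ Real.exp Kc := by
  set S := {p : Nat.Primes // ¬ (p : ℕ) ∣ n * (n - 1)}
  have he : Function.Injective (fun p : S => ((p : Nat.Primes) : ℕ)) :=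
    Nat.Primes.coe_nat_injective.comp Subtype.coe_injective
  have hq3 : ∀ p : S, (3:ℝ) ≤ (((p : Nat.Primes) : ℕ) : ℝ) := by
    intro p
    have hp : ((p : Nat.Primes) : ℕ).Prime := (p : Nat.Primes).2
    have : ((p : Nat.Primes) : ℕ) ≠ 2 := by
      intro hcon
      apply p.2
      rw [hcon]
      exact dvd_mul_of_dvd_left h2 _
    have := hp.two_le
    have h3 : 3 ≤ ((p : Nat.Primes) : ℕ) := by omega
    exact_mod_cast h3
  -- pointwise facts
  have hfact : ∀ p : S, |2 * chi (p : ℕ) / ((p : ℕ) * (((p : ℕ) : ℝ) - 2))| ≤ 2/3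
      ∧ |2 * chi (p : ℕ) / ((p : ℕ) * (((p : ℕ) : ℝ) - 2))| ≤ 6 / (((p:ℕ):ℝ))^2 := by
    intro p
    have h3 := hq3 p
    have hden : (3:ℝ) ≤ ((p:ℕ):ℝ) * (((p:ℕ):ℝ) - 2) := by nlinarith
    have hdenq : (((p:ℕ):ℝ))^2 / 3 ≤ ((p:ℕ):ℝ) * (((p:ℕ):ℝ) - 2) := by nlinarith
    have hnum : |2 * chi (p : ℕ)| ≤ 2 := by
      rw [abs_mul]
      have := abs_chi_le (p : ℕ)
      rw [abs_two]
      nlinarith [abs_nonneg (chi (p:ℕ))]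
    have habs : |2 * chi (p : ℕ) / ((p : ℕ) * (((p : ℕ) : ℝ) - 2))|
        ≤ 2 / (((p:ℕ):ℝ) * (((p:ℕ):ℝ) - 2)) := by
      rw [abs_div, abs_of_pos (by linarith : (0:ℝ) < ((p:ℕ):ℝ) * (((p:ℕ):ℝ) - 2))]
      apply div_le_div_of_nonneg_right hnum (by linarith)
    constructor
    · refine le_trans habs ?_
      rw [div_le_div_iff₀ (by linarith) (by norm_num)]
      linarith
    · refine le_trans habs ?_
      rw [div_le_div_iff₀ (by linarith) (by positivity)]
      nlinarith
  have hfpos : ∀ p : S, 0 < 1 + 2 * chi (p : ℕ) / ((p : ℕ) * (((p : ℕ) : ℝ) - 2)) := by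
    intro p
    have := (hfact p).1
    rcases abs_le.1 this with ⟨hl, -⟩
    linarith
  have hb : ∀ p : S, |Real.log (1 + 2 * chi (p : ℕ) / ((p : ℕ) * (((p : ℕ) : ℝ) - 2)))|
      ≤ 18 / (((p:ℕ):ℝ))^2 := by
    intro p
    have h1 := abs_log_one_add_le (hfact p).1
    refine le_trans h1 ?_
    have h2 := (hfact p).2
    have h3 : (18:ℝ) / (((p:ℕ):ℝ))^2 = 3 * (6 / (((p:ℕ):ℝ))^2) := by ring
    rw [h3]
    linarith
  have hgsum : Summable (fun p : S => (18:ℝ) / (((p:ℕ):ℝ))^2) := summable_inj 18 _ he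
  obtain ⟨-, hlo, hhi⟩ := tprod_bounds
    (fun p : S => 1 + 2 * chi (p : ℕ) / ((p : ℕ) * (((p : ℕ) : ℝ) - 2)))
    (fun p : S => (18:ℝ) / (((p:ℕ):ℝ))^2) hgsum hfpos hb
  have hKle : ∑' p : S, (18:ℝ) / (((p:ℕ):ℝ))^2 ≤ Kc := by
    apply Summable.tsum_le_tsum_of_inj (fun p : S => (p : Nat.Primes)) Subtype.coe_injective
      (fun c _ => by positivity) (fun i => le_rfl) hgsum
      (summable_inj 18 _ Nat.Primes.coe_nat_injective)
  constructor
  · refine le_trans ?_ hlo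
    apply Real.exp_le_exp.2
    linarith
  · refine le_trans hhi ?_
    exact Real.exp_le_exp.2 hKle

lemma P1_bounds (m : ℕ) :
    Real.exp (-(2 * ∑ p ∈ m.primeFactors, (1:ℝ)/p)) ≤ ∏ p ∈ m.primeFactors, (1 - chi p / p)
    ∧ (∏ p ∈ m.primeFactors, (1 - chi p / p)) ≤ Real.exp (∑ p ∈ m.primeFactors, (1:ℝ)/p) := by
  have hq : ∀ p ∈ m.primeFactors, (2:ℝ) ≤ (p:ℝ) := by
    intro p hp
    exact_mod_cast (Nat.prime_of_mem_primeFactors hp).two_le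
  have habs : ∀ p ∈ m.primeFactors, |chi p / p| ≤ 1/(p:ℝ) := by
    intro p hp
    have h2 := hq p hp
    rw [abs_div, abs_of_pos (by linarith : (0:ℝ) < (p:ℝ))]
    apply div_le_div_of_nonneg_right (abs_chi_le p) (by linarith)
  constructor
  · rw [show -(2 * ∑ p ∈ m.primeFactors, (1:ℝ)/p)
        = ∑ p ∈ m.primeFactors, (-(2 * (1/(p:ℝ)))) from by
          rw [Finset.mul_sum, ← Finset.sum_neg_distrib],
      Real.exp_sum]
    apply Finset.prod_le_prod (fun p _ => le_of_lt (Real.exp_pos _))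
    intro p hp
    have h2 := hq p hp
    have h3 := abs_le.1 (habs p hp)
    have h4 : 1/(p:ℝ) ≤ 1/2 := by
      apply div_le_div_of_nonneg_left (by norm_num) (by norm_num) h2
    have := exp_neg_two_le (by positivity : (0:ℝ) ≤ 1/(p:ℝ)) h4
    linarith
  · rw [Real.exp_sum]
    apply Finset.prod_le_prod
    · intro p hp
      have h3 := abs_le.1 (habs p hp)
      have h2 := hq p hp
      have h4 : 1/(p:ℝ) ≤ 1/2 := by
        apply div_le_div_of_nonneg_left (by norm_num) (by norm_num) h2
      linarith
    · intro p hp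
      have h3 := abs_le.1 (habs p hp)
      have := Real.add_one_le_exp (1/(p:ℝ))
      linarith

lemma P2_bounds (n : ℕ) (hn : 1 ≤ n) :
    (1:ℝ) ≤ (∏ p ∈ n.primeFactors.filter (fun p => 2 < p),
        (1 + ((p : ℝ) + chi p) / (p * ((p : ℝ) - 2))))
    ∧ (∏ p ∈ n.primeFactors.filter (fun p => 2 < p),
        (1 + ((p : ℝ) + chi p) / (p * ((p : ℝ) - 2))))
      ≤ Real.exp ((∑ p ∈ n.primeFactors, (1:ℝ)/p) + 18) := by
  have hq : ∀ p ∈ n.primeFactors.filter (fun p => 2 < p), (3:ℝ) ≤ (p:ℝ) := by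
    intro p hp
    simp only [Finset.mem_filter] at hp
    exact_mod_cast hp.2
  have hfge1 : ∀ p ∈ n.primeFactors.filter (fun p => 2 < p),
      (1:ℝ) ≤ 1 + ((p : ℝ) + chi p) / (p * ((p : ℝ) - 2)) := by
    intro p hp
    have h3 := hq p hp
    have hchi := abs_le.1 (abs_chi_le p)
    have hnum : (0:ℝ) ≤ (p:ℝ) + chi p := by linarith [hchi.1]
    have hden : (0:ℝ) < (p:ℝ) * ((p:ℝ) - 2) := by nlinarith
    have := div_nonneg hnum (le_of_lt hden)
    linarith
  constructor
  · calc (1:ℝ) = ∏ _p ∈ n.primeFactors.filter (fun p => 2 < p), (1:ℝ) := by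
          rw [Finset.prod_const_one]
      _ ≤ _ := Finset.prod_le_prod (fun p _ => by norm_num) hfge1
  · have hfle : ∀ p ∈ n.primeFactors.filter (fun p => 2 < p),
        1 + ((p : ℝ) + chi p) / (p * ((p : ℝ) - 2)) ≤ Real.exp (1/(p:ℝ) + 9/(p:ℝ)^2) := by
      intro p hp
      have h3 := hq p hp
      have hchi := abs_le.1 (abs_chi_le p)
      have hden : (0:ℝ) < (p:ℝ) * ((p:ℝ) - 2) := by nlinarith
      have hstep : ((p : ℝ) + chi p) / (p * ((p : ℝ) - 2)) ≤ 1/(p:ℝ) + 9/(p:ℝ)^2 := by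
        rw [div_le_iff₀ hden]
        have e1 : (1/(p:ℝ) + 9/(p:ℝ)^2) * ((p:ℝ) * ((p:ℝ) - 2))
            = ((p:ℝ) - 2) + 9*((p:ℝ)-2)/(p:ℝ) := by
          field_simp
        rw [e1]
        have : 9*((p:ℝ)-2)/(p:ℝ) ≥ 3 := by
          rw [ge_iff_le, le_div_iff₀ (by linarith)]
          nlinarith
        linarith [hchi.2]
      have := Real.add_one_le_exp (1/(p:ℝ) + 9/(p:ℝ)^2)
      linarith
    calc ∏ p ∈ n.primeFactors.filter (fun p => 2 < p),
          (1 + ((p : ℝ) + chi p) / (p * ((p : ℝ) - 2)))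
        ≤ ∏ p ∈ n.primeFactors.filter (fun p => 2 < p), Real.exp (1/(p:ℝ) + 9/(p:ℝ)^2) := by
          apply Finset.prod_le_prod
          · intro p hp; linarith [hfge1 p hp]
          · exact hfle
      _ = Real.exp (∑ p ∈ n.primeFactors.filter (fun p => 2 < p), (1/(p:ℝ) + 9/(p:ℝ)^2)) :=
          (Real.exp_sum _ _).symm
      _ ≤ Real.exp ((∑ p ∈ n.primeFactors, (1:ℝ)/p) + 18) := by
          apply Real.exp_le_exp.2
          rw [Finset.sum_add_distrib]
          have h1 : ∑ p ∈ n.primeFactors.filter (fun p => 2 < p), 1/(p:ℝ)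
              ≤ ∑ p ∈ n.primeFactors, (1:ℝ)/p := by
            apply Finset.sum_le_sum_of_subset_of_nonneg (Finset.filter_subset _ _)
            intro p hp _
            positivity
          have h2 : ∑ p ∈ n.primeFactors.filter (fun p => 2 < p), 9/(p:ℝ)^2 ≤ 18 := by
            have hsub : n.primeFactors.filter (fun p => 2 < p) ⊆ Finset.Icc 1 n := by
              intro p hp
              have hp' := Finset.mem_of_mem_filter _ hp
              have h1 := (Nat.prime_of_mem_primeFactors hp').two_le
              have h2 := Nat.le_of_mem_primeFactors hp'
              exact Finset.mem_Icc.2 ⟨by omega, h2⟩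
            calc ∑ p ∈ n.primeFactors.filter (fun p => 2 < p), 9/(p:ℝ)^2
                ≤ ∑ p ∈ Finset.Icc 1 n, 9/(p:ℝ)^2 := by
                  apply Finset.sum_le_sum_of_subset_of_nonneg hsub
                  intro p hp _
                  positivity
              _ = 9 * ∑ p ∈ Finset.Icc 1 n, 1/(p:ℝ)^2 := by
                  rw [Finset.mul_sum]
                  apply Finset.sum_congr rfl
                  intro p _
                  ring
              _ ≤ 9 * 2 := by linarith [sum_inv_sq_le n]
              _ = 18 := by norm_num
          linarith

/-- `n / (log log 10n)² ≪ M_R(n) ≪ n (log log 10n)²` for even `n ≥ 4`. -/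
theorem MR_size :
    ∃ c₁ > 0, ∃ c₂ > 0, ∀ n : ℕ, 4 ≤ n → 2 ∣ n →
      c₁ * n / (Real.log (Real.log (10 * n))) ^ 2 ≤ MR n ∧
      MR n ≤ c₂ * n * (Real.log (Real.log (10 * n))) ^ 2 := by
  refine ⟨Real.pi * c₀ * Real.exp (-Kc) * Real.exp (-12),
    mul_pos (mul_pos (mul_pos Real.pi_pos c0_pos) (Real.exp_pos _)) (Real.exp_pos _),
    Real.pi * c₀ * Real.exp (Kc + 30),
    mul_pos (mul_pos Real.pi_pos c0_pos) (Real.exp_pos _), ?_⟩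
  intro n hn4 hn2
  have hnR : (4:ℝ) ≤ (n:ℝ) := by exact_mod_cast hn4
  have h30 : (30:ℝ) ≤ 10 * (n:ℝ) := by linarith
  have hlog3 : (3:ℝ) < Real.log (10 * (n:ℝ)) :=
    lt_of_lt_of_le exp3_lt_30 (Real.log_le_log (by norm_num) h30)
  have hL1 : (1:ℝ) < Real.log (Real.log (10 * (n:ℝ))) :=
    lt_of_lt_of_le log3_gt_one (Real.log_le_log (by norm_num) (by linarith))
  have hLpos : (0:ℝ) < Real.log (Real.log (10 * (n:ℝ))) := by linarith
  set L := Real.log (Real.log (10 * (n:ℝ))) with hLdef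
  have hexpL : Real.exp (Real.log L) = L := Real.exp_log hLpos
  have hSn : ∑ p ∈ n.primeFactors, (1:ℝ)/p ≤ Real.log L + 6 := key_lemma n (by omega)
  have hSm : ∑ p ∈ (n-1).primeFactors, (1:ℝ)/p ≤ Real.log L + 6 := by
    have h1 := key_lemma (n-1) (by omega)
    have hc : ((n-1 : ℕ):ℝ) = (n:ℝ) - 1 := by
      rw [Nat.cast_sub (by omega : 1 ≤ n), Nat.cast_one]
    rw [hc] at h1
    have h29 : (30:ℝ) ≤ 10*((n:ℝ)-1) := by linarith
    have l0 : (3:ℝ) < Real.log (10*((n:ℝ)-1)) :=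
      lt_of_lt_of_le exp3_lt_30 (Real.log_le_log (by norm_num) h29)
    have l1 : Real.log (10*((n:ℝ)-1)) ≤ Real.log (10*(n:ℝ)) :=
      Real.log_le_log (by linarith) (by linarith)
    have l2 : Real.log (Real.log (10*((n:ℝ)-1))) ≤ L :=
      Real.log_le_log (by linarith) l1
    have l3 : (1:ℝ) < Real.log (Real.log (10*((n:ℝ)-1))) :=
      lt_of_lt_of_le log3_gt_one (Real.log_le_log (by norm_num) (by linarith))
    have l4 : Real.log (Real.log (Real.log (10*((n:ℝ)-1)))) ≤ Real.log L :=
      Real.log_le_log (by linarith) l2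
    linarith
  obtain ⟨hP1lo, hP1hi⟩ := P1_bounds (n-1)
  obtain ⟨hP2lo, hP2hi⟩ := P2_bounds n (by omega)
  obtain ⟨hP3lo, hP3hi⟩ := P3_bounds n hn4 hn2
  set P1 := ∏ p ∈ (n - 1).primeFactors, (1 - chi p / (p:ℝ)) with hP1def
  set P2 := ∏ p ∈ n.primeFactors.filter (fun p => 2 < p),
      (1 + ((p : ℝ) + chi p) / (p * ((p : ℝ) - 2))) with hP2def
  set P3 := ∏' p : {p : Nat.Primes // ¬ (p : ℕ) ∣ n * (n - 1)},
      (1 + 2 * chi (p : ℕ) / ((p : ℕ) * (((p : ℕ) : ℝ) - 2))) with hP3def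
  have hP1pos : 0 < P1 := lt_of_lt_of_le (Real.exp_pos _) hP1lo
  have hP2pos : 0 < P2 := lt_of_lt_of_le one_pos hP2lo
  have hP3pos : 0 < P3 := lt_of_lt_of_le (Real.exp_pos _) hP3lo
  have hA : (0:ℝ) < Real.pi * c₀ * n := by
    apply mul_pos (mul_pos Real.pi_pos c0_pos)
    linarith
  have hMR : MR n = Real.pi * c₀ * n * P1 * P2 * P3 := rfl
  constructor
  · -- lower bound
    have e1 : Real.exp (-12) / L^2 ≤ P1 := by
      refine le_trans ?_ hP1lo
      have h2 : -(2*(Real.log L + 6)) ≤ -(2 * ∑ p ∈ (n-1).primeFactors, (1:ℝ)/p) := by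
        linarith
      refine le_trans (le_of_eq ?_) (Real.exp_le_exp.2 h2)
      rw [show -(2*(Real.log L + 6)) = (-12) + (-(Real.log L) + -(Real.log L)) by ring,
        Real.exp_add, Real.exp_add, Real.exp_neg (Real.log L), hexpL]
      field_simp
    have m1 : Real.pi * c₀ * n * (Real.exp (-12)/L^2) ≤ Real.pi * c₀ * n * P1 :=
      mul_le_mul_of_nonneg_left e1 (le_of_lt hA)
    have m2 : Real.pi * c₀ * n * (Real.exp (-12)/L^2) * 1 ≤ Real.pi * c₀ * n * P1 * P2 :=
      mul_le_mul m1 hP2lo zero_le_one (by positivity)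
    have m3 : Real.pi * c₀ * n * (Real.exp (-12)/L^2) * 1 * Real.exp (-Kc)
        ≤ Real.pi * c₀ * n * P1 * P2 * P3 :=
      mul_le_mul m2 hP3lo (le_of_lt (Real.exp_pos _)) (by positivity)
    calc Real.pi * c₀ * Real.exp (-Kc) * Real.exp (-12) * n / L^2
        = Real.pi * c₀ * n * (Real.exp (-12)/L^2) * 1 * Real.exp (-Kc) := by ring
      _ ≤ Real.pi * c₀ * n * P1 * P2 * P3 := m3
      _ = MR n := hMR.symm
  · -- upper bound
    have u0 : P1 ≤ Real.exp (Real.log L + 6) :=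
      le_trans hP1hi (Real.exp_le_exp.2 hSm)
    have u0' : P2 ≤ Real.exp (Real.log L + 24) :=
      le_trans hP2hi (Real.exp_le_exp.2 (by linarith))
    have u1 : Real.pi * c₀ * n * P1 ≤ Real.pi * c₀ * n * Real.exp (Real.log L + 6) :=
      mul_le_mul_of_nonneg_left u0 (le_of_lt hA)
    have u2 : Real.pi * c₀ * n * P1 * P2
        ≤ Real.pi * c₀ * n * Real.exp (Real.log L + 6) * Real.exp (Real.log L + 24) :=
      mul_le_mul u1 u0' (le_of_lt hP2pos) (by positivity)
    have u3 : Real.pi * c₀ * n * P1 * P2 * P3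
        ≤ Real.pi * c₀ * n * Real.exp (Real.log L + 6) * Real.exp (Real.log L + 24)
            * Real.exp Kc :=
      mul_le_mul u2 hP3hi (le_of_lt hP3pos) (by positivity)
    calc MR n = Real.pi * c₀ * n * P1 * P2 * P3 := hMR
      _ ≤ Real.pi * c₀ * n * Real.exp (Real.log L + 6) * Real.exp (Real.log L + 24)
            * Real.exp Kc := u3
      _ = Real.pi * c₀ * Real.exp (Kc + 30) * n * L^2 := by
          have h1 : Real.exp (Real.log L + 6) * Real.exp (Real.log L + 24) * Real.exp Kc
              = L^2 * Real.exp (Kc + 30) := by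
            rw [← Real.exp_add, ← Real.exp_add]
            rw [show Real.log L + 6 + (Real.log L + 24) + Kc
                = Real.log L + (Real.log L + (Kc + 30)) by ring]
            rw [Real.exp_add, Real.exp_add, hexpL]
            ring
          have h2 : Real.pi * c₀ * (n:ℝ) * Real.exp (Real.log L + 6)
                * Real.exp (Real.log L + 24) * Real.exp Kc
              = Real.pi * c₀ * (n:ℝ)
                * (Real.exp (Real.log L + 6) * Real.exp (Real.log L + 24) * Real.exp Kc) := by
            ring
          rw [h2, h1]
          ring
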